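/- Every countable circle graph is isomorphic to an induced subgraph of the rational circle graph 𝒞_ℚ; that is, 𝒞_ℚ is strongly universal for the class of countable circle graphs. -/

import Mathlib

set_option maxHeartbeats 1000000


noncomputable section

/-- The unit circle in the complex plane. -/
def S1 : Set ℂ := {z : ℂ | ‖z‖ = 1}

/-- The closed segment in the plane spanned by an unordered pair of points. -/
def chordSegment : Sym2 ℂ → Set ℂ :=
  Sym2.lift ⟨fun a b => segment ℝ a b, fun a b => segment_symm ℝ a b⟩

/-- A chord of the circle: an unordered pair of two distinct points of `S1`. -/
def Chord : Type := {p : Sym2 ℂ // (∀ z ∈ p, z ∈ S1) ∧ ¬ p.IsDiag}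

/-- The circle graph: vertices are the chords of the circle, two distinct chords being
adjacent whenever their segments intersect. -/
def CircleGraph : SimpleGraph Chord where
  Adj C D := C ≠ D ∧ (chordSegment C.1 ∩ chordSegment D.1).Nonempty
  symm := ⟨fun C D ⟨h1, h2⟩ => ⟨h1.symm, by rwa [Set.inter_comm]⟩⟩
  loopless := ⟨fun C h => h.1 rfl⟩

/-- The rational points of the circle: the points `exp (2 π i q)` for `q : ℚ`. -/
def Q1 : Set ℂ := {z : ℂ | ∃ q : ℚ, z = Complex.exp (2 * Real.pi * Complex.I * q)}

/-- A rational chord: an unordered pair of two distinct rational points of the circle. -/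
def ChordQ : Type := {p : Sym2 ℂ // (∀ z ∈ p, z ∈ Q1) ∧ ¬ p.IsDiag}

/-- The rational circle graph: vertices are the rational chords, two distinct chords
being adjacent whenever their segments intersect. -/
def RationalCircleGraph : SimpleGraph ChordQ where
  Adj C D := C ≠ D ∧ (chordSegment C.1 ∩ chordSegment D.1).Nonempty
  symm := ⟨fun C D ⟨h1, h2⟩ => ⟨h1.symm, by rwa [Set.inter_comm]⟩⟩
  loopless := ⟨fun C h => h.1 rfl⟩

/-- A graph is a circle graph if it is isomorphic to the intersection graph of some
family of chords of the circle, i.e. to an induced subgraph of the circle graph. -/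
def IsCircleGraph {V : Type*} (G : SimpleGraph V) : Prop :=
  ∃ F : Set Chord, Nonempty (G ≃g (CircleGraph.induce F))



section aux
open Real Set

def pt (t : ℝ) : ℂ := Complex.exp (2 * Real.pi * Complex.I * t)

lemma pt_def (t : ℝ) : pt t = Complex.exp ((2 * Real.pi * t : ℝ) * Complex.I) := by
  unfold pt; push_cast; ring_nf

lemma pt_re (t : ℝ) : (pt t).re = Real.cos (2 * Real.pi * t) := by
  rw [pt_def, Complex.exp_ofReal_mul_I_re]

lemma pt_im (t : ℝ) : (pt t).im = Real.sin (2 * Real.pi * t) := by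
  rw [pt_def, Complex.exp_ofReal_mul_I_im]

lemma norm_pt (t : ℝ) : ‖pt t‖ = 1 := by
  rw [pt_def]; exact Complex.norm_exp_ofReal_mul_I _

lemma pt_inj {a b : ℝ} (ha : a ∈ Ico (0:ℝ) 1) (hb : b ∈ Ico (0:ℝ) 1)
    (h : pt a = pt b) : a = b := by
  unfold pt at h
  rw [Complex.exp_eq_exp_iff_exists_int] at h
  obtain ⟨n, hn⟩ := h
  have h2 : (2 * Real.pi * Complex.I) * (a : ℂ) = (2 * Real.pi * Complex.I) * (b + n) := by
    rw [hn]; ring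
  have hne : (2 * Real.pi * Complex.I : ℂ) ≠ 0 := by
    simp [Complex.I_ne_zero, Real.pi_ne_zero, Complex.ofReal_ne_zero]
  have h3 : (a : ℂ) = (b + n : ℝ) := by
    push_cast; exact mul_left_cancel₀ hne h2
  have h4 : a = b + n := by exact_mod_cast h3
  have : (n : ℝ) = a - b := by linarith
  have hn0 : n = 0 := by
    have h5 : (-1 : ℝ) < n := by rw [this]; cases ha; cases hb; linarith
    have h6 : (n : ℝ) < 1 := by rw [this]; cases ha; cases hb; linarith
    have h5' : (-1 : ℤ) < n := by exact_mod_cast h5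
    have h6' : (n : ℤ) < 1 := by exact_mod_cast h6
    omega
  simp [hn0] at h4; linarith

/-- side functional of the chord from `pt a` to `pt b` -/
def ell (a b : ℝ) (z : ℂ) : ℝ :=
  (pt b - pt a).re * (z - pt a).im - (pt b - pt a).im * (z - pt a).re

lemma ell_pt (a b t : ℝ) :
    ell a b (pt t) = 4 * Real.sin (Real.pi * (b - a)) * Real.sin (Real.pi * (t - a))
      * Real.sin (Real.pi * (t - b)) := by
  unfold ell
  simp only [Complex.sub_re, Complex.sub_im, pt_re, pt_im]
  have key : ∀ x y : ℝ, Real.cos (2*Real.pi*x) * Real.sin (2*Real.pi*y)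
      - Real.sin (2*Real.pi*x) * Real.cos (2*Real.pi*y) = Real.sin (2*Real.pi*(y-x)) := by
    intro x y
    rw [show 2*Real.pi*(y-x) = 2*Real.pi*y - 2*Real.pi*x by ring, Real.sin_sub]; ring
  -- expand the product
  have expand : (Real.cos (2*Real.pi*b) - Real.cos (2*Real.pi*a)) * (Real.sin (2*Real.pi*t) - Real.sin (2*Real.pi*a))
      - (Real.sin (2*Real.pi*b) - Real.sin (2*Real.pi*a)) * (Real.cos (2*Real.pi*t) - Real.cos (2*Real.pi*a))
      = (Real.sin (2*Real.pi*(t-b)) - Real.sin (2*Real.pi*(t-a))) + Real.sin (2*Real.pi*(b-a)) := by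
    rw [← key b t, ← key a t, ← key a b]
    ring_nf
  rw [expand]
  rw [Real.sin_sub_sin,
    show (2*Real.pi*(t-b) - 2*Real.pi*(t-a))/2 = -(Real.pi*(b-a)) by ring,
    show (2*Real.pi*(t-b) + 2*Real.pi*(t-a))/2 = Real.pi*(2*t-a-b) by ring,
    Real.sin_neg,
    show 2*Real.pi*(b-a) = 2*(Real.pi*(b-a)) by ring, Real.sin_two_mul]
  have e3 : Real.cos (Real.pi*(b-a)) - Real.cos (Real.pi*(2*t-a-b))
      = -2 * Real.sin (Real.pi*(t-a)) * Real.sin (Real.pi*(b-t)) := by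
    rw [Real.cos_sub_cos,
      show (Real.pi*(b-a) + Real.pi*(2*t-a-b))/2 = Real.pi*(t-a) by ring,
      show (Real.pi*(b-a) - Real.pi*(2*t-a-b))/2 = Real.pi*(b-t) by ring]
  have e4 : Real.sin (Real.pi*(b-t)) = -Real.sin (Real.pi*(t-b)) := by
    rw [show Real.pi*(b-t) = -(Real.pi*(t-b)) by ring, Real.sin_neg]
  rw [e4] at e3
  linear_combination 2 * Real.sin (Real.pi*(b-a)) * e3

lemma ell_affine (a b : ℝ) {s t : ℝ} (hst : s + t = 1) (z w : ℂ) :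
    ell a b (s • z + t • w) = s * ell a b z + t * ell a b w := by
  have ht : t = 1 - s := by linarith
  subst ht
  unfold ell
  simp only [Complex.real_smul, Complex.sub_re, Complex.sub_im, Complex.add_re,
    Complex.add_im, Complex.mul_re, Complex.mul_im, Complex.ofReal_re, Complex.ofReal_im]
  ring

lemma ell_pa (a b : ℝ) : ell a b (pt a) = 0 := by unfold ell; simp
lemma ell_pb (a b : ℝ) : ell a b (pt b) = 0 := by unfold ell; ring

lemma ell_zero_on_seg {a b : ℝ} {x : ℂ} (hx : x ∈ segment ℝ (pt a) (pt b)) :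
    ell a b x = 0 := by
  obtain ⟨s, t, hs, ht, hst, rfl⟩ := hx
  rw [ell_affine a b hst, ell_pa, ell_pb]; ring

lemma norm_seg {z w x : ℂ} (hz : ‖z‖ = 1) (hw : ‖w‖ = 1)
    (hx : x ∈ segment ℝ z w) : ‖x‖ ≤ 1 := by
  obtain ⟨s, t, hs, ht, hst, rfl⟩ := hx
  calc ‖s • z + t • w‖ ≤ ‖s • z‖ + ‖t • w‖ := norm_add_le _ _
    _ = s * ‖z‖ + t * ‖w‖ := by
        rw [norm_smul, norm_smul, Real.norm_of_nonneg hs, Real.norm_of_nonneg ht]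
    _ = 1 := by rw [hz, hw]; linarith

lemma on_line {a b : ℝ} (hab : pt a ≠ pt b) {x : ℂ} (hx0 : ell a b x = 0)
    (hx1 : ‖x‖ ≤ 1) : x ∈ segment ℝ (pt a) (pt b) := by
  set u : ℂ := pt b - pt a with hu
  have hu0 : u ≠ 0 := sub_ne_zero.2 (Ne.symm hab)
  have hn : 0 < u.re ^ 2 + u.im ^ 2 := by
    have h := Complex.normSq_pos.mpr hu0
    rw [Complex.normSq_apply] at h
    nlinarith [h]
  set v : ℂ := x - pt a with hv
  have hcross : u.re * v.im = u.im * v.re := by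
    have := hx0; unfold ell at this; rw [← hu, ← hv] at this; linarith
  set r : ℝ := (v.re * u.re + v.im * u.im) / (u.re ^ 2 + u.im ^ 2) with hr
  have hvre : v.re = r * u.re := by
    rw [hr]; field_simp; linear_combination (-u.im) * hcross
  have hvim : v.im = r * u.im := by
    rw [hr]; field_simp; linear_combination u.re * hcross
  -- quadratic bound
  have nsq : ∀ z : ℂ, ‖z‖ ≤ 1 → z.re ^ 2 + z.im ^ 2 ≤ 1 := by
    intro z hz
    have h1 : ‖z‖ ^ 2 = z.re ^ 2 + z.im ^ 2 := by
      rw [Complex.sq_norm, Complex.normSq_apply]; ring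
    rw [← h1]
    have : ‖z‖ ≤ 1 := hz
    nlinarith [norm_nonneg z]
  have nsq1 : ∀ z : ℂ, ‖z‖ = 1 → z.re ^ 2 + z.im ^ 2 = 1 := by
    intro z hz
    have h1 : ‖z‖ ^ 2 = z.re ^ 2 + z.im ^ 2 := by
      rw [Complex.sq_norm, Complex.normSq_apply]; ring
    rw [← h1]; rw [show ‖z‖ = 1 from hz]; norm_num
  have npa := nsq1 _ (norm_pt a)
  have npb := nsq1 _ (norm_pt b)
  have nx := nsq _ hx1
  -- coordinates of x : x = pt a + v, pt b = pt a + u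
  have hxre : x.re = (pt a).re + r * u.re := by
    have : v.re = x.re - (pt a).re := by rw [hv]; simp
    linarith [hvre, this]
  have hxim : x.im = (pt a).im + r * u.im := by
    have : v.im = x.im - (pt a).im := by rw [hv]; simp
    linarith [hvim, this]
  have hbre : (pt b).re = (pt a).re + u.re := by rw [hu]; simp
  have hbim : (pt b).im = (pt a).im + u.im := by rw [hu]; simp
  rw [hxre, hxim] at nx
  rw [hbre, hbim] at npb
  have hPU : 2*((pt a).re*u.re + (pt a).im*u.im) = -(u.re^2+u.im^2) := by
    linear_combination npb - npa
  have h3 : 2*r*((pt a).re*u.re + (pt a).im*u.im) = -(r*(u.re^2+u.im^2)) := by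
    linear_combination r * hPU
  have keyN : (u.re^2+u.im^2) * (r*(r-1)) ≤ 0 := by nlinarith [nx, npa, h3]
  have key : r * (r - 1) ≤ 0 := by
    by_contra hc
    push_neg at hc
    nlinarith [mul_pos hn hc]
  have hr0 : 0 ≤ r := by nlinarith [key]
  have hr1 : r ≤ 1 := by nlinarith [key]
  refine ⟨1 - r, r, by linarith, hr0, by ring, ?_⟩
  have : x = pt a + (r : ℂ) * u := by
    apply Complex.ext <;> simp [Complex.add_re, Complex.add_im, Complex.mul_re,
      Complex.mul_im, hxre, hxim]
  rw [this, hu]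
  push_cast [Complex.real_smul]
  ring


lemma crossing {a b : ℝ} (hab : pt a ≠ pt b) {z w : ℂ} (hz : ‖z‖ = 1) (hw : ‖w‖ = 1)
    (hlz : ell a b z < 0) (hlw : 0 < ell a b w) :
    ∃ x, x ∈ segment ℝ (pt a) (pt b) ∧ x ∈ segment ℝ z w := by
  set d : ℝ := ell a b w - ell a b z with hd
  have hd0 : 0 < d := by rw [hd]; linarith
  set s : ℝ := ell a b w / d with hs
  set t : ℝ := -(ell a b z) / d with ht
  have hs0 : 0 ≤ s := div_nonneg (by linarith) (by linarith)
  have ht0 : 0 ≤ t := div_nonneg (by linarith) (by linarith)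
  have hst : s + t = 1 := by rw [hs, ht]; field_simp; rw [hd]; ring
  refine ⟨s • z + t • w, ?_, ⟨s, t, hs0, ht0, hst, rfl⟩⟩
  apply on_line hab
  · rw [ell_affine a b hst, hs, ht]
    field_simp
    ring
  · exact norm_seg hz hw ⟨s, t, hs0, ht0, hst, rfl⟩

lemma same_side {a b : ℝ} {z w : ℂ}
    (h : (0 < ell a b z ∧ 0 < ell a b w) ∨ (ell a b z < 0 ∧ ell a b w < 0))
    {x : ℂ} (hx : x ∈ segment ℝ z w) : ell a b x ≠ 0 := by
  obtain ⟨s, t, hs, ht, hst, rfl⟩ := hx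
  rw [ell_affine a b hst]
  rcases h with ⟨h1, h2⟩ | ⟨h1, h2⟩
  · have hpos : 0 < s * ell a b z + t * ell a b w := by
      rcases le_or_gt s (1/2) with hh | hh
      · nlinarith [mul_nonneg hs h1.le]
      · nlinarith [mul_nonneg ht h2.le]
    exact hpos.ne'
  · have hneg : s * ell a b z + t * ell a b w < 0 := by
      rcases le_or_gt s (1/2) with hh | hh
      · nlinarith [mul_nonneg hs (neg_nonneg.2 h1.le)]
      · nlinarith [mul_nonneg ht (neg_nonneg.2 h2.le)]
    exact hneg.ne

lemma sin_pi_pos {x : ℝ} (h0 : 0 < x) (h1 : x < 1) : 0 < Real.sin (Real.pi * x) :=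
  Real.sin_pos_of_pos_of_lt_pi (by positivity) (by nlinarith [Real.pi_pos])

lemma sin_pi_neg {x : ℝ} (h0 : -1 < x) (h1 : x < 0) : Real.sin (Real.pi * x) < 0 := by
  have := sin_pi_pos (by linarith : (0:ℝ) < -x) (by linarith)
  rw [show Real.pi * -x = -(Real.pi * x) by ring, Real.sin_neg] at this
  linarith

lemma ell_sign {a b t : ℝ} (ha : a ∈ Ico (0:ℝ) 1) (hb : b ∈ Ico (0:ℝ) 1) (hab : a < b)
    (ht : t ∈ Ico (0:ℝ) 1) (hta : t ≠ a) (htb : t ≠ b) :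
    (t ∈ Ioo a b → ell a b (pt t) < 0) ∧ (t ∉ Ioo a b → 0 < ell a b (pt t)) := by
  obtain ⟨ha0, ha1⟩ := ha; obtain ⟨hb0, hb1⟩ := hb; obtain ⟨ht0, ht1⟩ := ht
  have S1 : 0 < Real.sin (Real.pi * (b - a)) := sin_pi_pos (by linarith) (by linarith)
  rw [ell_pt]
  constructor
  · rintro ⟨h1, h2⟩
    have S2 : 0 < Real.sin (Real.pi * (t - a)) := sin_pi_pos (by linarith) (by linarith)
    have S3 : Real.sin (Real.pi * (t - b)) < 0 := sin_pi_neg (by linarith) (by linarith)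
    exact mul_neg_of_pos_of_neg (mul_pos (mul_pos (by norm_num : (0:ℝ) < 4) S1) S2) S3
  · intro h
    rw [Set.mem_Ioo] at h
    push_neg at h
    rcases lt_or_ge t a with hlt | hge
    · have S2 : Real.sin (Real.pi * (t - a)) < 0 := sin_pi_neg (by linarith) (by linarith)
      have S3 : Real.sin (Real.pi * (t - b)) < 0 := sin_pi_neg (by linarith) (by linarith)
      exact mul_pos_of_neg_of_neg
        (mul_neg_of_pos_of_neg (mul_pos (by norm_num : (0:ℝ) < 4) S1) S2) S3
    · have hta' : a < t := lt_of_le_of_ne hge (Ne.symm hta)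
      have hbt : b < t := lt_of_le_of_ne (h hta') (Ne.symm htb)
      have S2 : 0 < Real.sin (Real.pi * (t - a)) := sin_pi_pos (by linarith) (by linarith)
      have S3 : 0 < Real.sin (Real.pi * (t - b)) := sin_pi_pos (by linarith) (by linarith)
      exact mul_pos (mul_pos (mul_pos (by norm_num : (0:ℝ) < 4) S1) S2) S3

theorem chords_intersect_iff {a b c d : ℝ} (ha : a ∈ Ico (0:ℝ) 1) (hb : b ∈ Ico (0:ℝ) 1)
    (hc : c ∈ Ico (0:ℝ) 1) (hd : d ∈ Ico (0:ℝ) 1) (hab : a < b) (hcd : c < d) :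
    (segment ℝ (pt a) (pt b) ∩ segment ℝ (pt c) (pt d)).Nonempty ↔
      (a = c ∨ a = d ∨ b = c ∨ b = d ∨ ¬(c ∈ Ioo a b ↔ d ∈ Ioo a b)) := by
  constructor
  · intro ⟨x, hx1, hx2⟩
    by_contra hcon
    push_neg at hcon
    obtain ⟨hac, had, hbc, hbd, hiff⟩ := hcon
    have hLc := ell_sign ha hb hab hc (Ne.symm hac) (Ne.symm hbc)
    have hLd := ell_sign ha hb hab hd (Ne.symm had) (Ne.symm hbd)
    have hx0 : ell a b x = 0 := ell_zero_on_seg hx1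
    refine same_side ?_ hx2 hx0
    by_cases hcin : c ∈ Ioo a b
    · exact Or.inr ⟨hLc.1 hcin, hLd.1 (hiff.1 hcin)⟩
    · exact Or.inl ⟨hLc.2 hcin, hLd.2 (fun h => hcin (hiff.2 h))⟩
  · intro h
    have hpab : pt a ≠ pt b := fun h' => absurd (pt_inj ha hb h') (ne_of_lt hab)
    rcases h with h | h | h | h | h
    · exact ⟨pt a, left_mem_segment ℝ _ _, h ▸ left_mem_segment ℝ _ _⟩
    · exact ⟨pt a, left_mem_segment ℝ _ _, h ▸ right_mem_segment ℝ _ _⟩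
    · exact ⟨pt b, right_mem_segment ℝ _ _, h ▸ left_mem_segment ℝ _ _⟩
    · exact ⟨pt b, right_mem_segment ℝ _ _, h ▸ right_mem_segment ℝ _ _⟩
    · -- crossing case: first rule out shared endpoints
      by_cases hac : a = c
      · exact ⟨pt a, left_mem_segment ℝ _ _, hac ▸ left_mem_segment ℝ _ _⟩
      by_cases had : a = d
      · exact ⟨pt a, left_mem_segment ℝ _ _, had ▸ right_mem_segment ℝ _ _⟩
      by_cases hbc : b = c
      · exact ⟨pt b, right_mem_segment ℝ _ _, hbc ▸ left_mem_segment ℝ _ _⟩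
      by_cases hbd : b = d
      · exact ⟨pt b, right_mem_segment ℝ _ _, hbd ▸ right_mem_segment ℝ _ _⟩
      have hLc := ell_sign ha hb hab hc (Ne.symm hac) (Ne.symm hbc)
      have hLd := ell_sign ha hb hab hd (Ne.symm had) (Ne.symm hbd)
      by_cases hcin : c ∈ Ioo a b
      · have hdin : d ∉ Ioo a b := fun h' => h ⟨fun _ => h', fun _ => hcin⟩
        obtain ⟨x, hx1, hx2⟩ := crossing hpab (norm_pt c) (norm_pt d)
          (hLc.1 hcin) (hLd.2 hdin)
        exact ⟨x, hx1, hx2⟩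
      · have hdin : d ∈ Ioo a b := by
          by_contra hdn
          exact h ⟨fun h' => absurd h' hcin, fun h' => absurd h' hdn⟩
        obtain ⟨x, hx1, hx2⟩ := crossing hpab (norm_pt d) (norm_pt c)
          (hLd.1 hdin) (hLc.2 hcin)
        exact ⟨x, hx1, by rwa [segment_symm]⟩

lemma pt_rat (q : ℚ) : pt (q : ℝ) = Complex.exp (2 * Real.pi * Complex.I * q) := by
  unfold pt; norm_num

lemma mem_Q1_iff {z : ℂ} : z ∈ Q1 ↔ ∃ q : ℚ, z = pt (q : ℝ) := by
  unfold Q1; simp only [mem_setOf_eq, pt_rat]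

lemma Q1_subset_S1 : Q1 ⊆ S1 := by
  intro z hz
  obtain ⟨q, rfl⟩ := mem_Q1_iff.1 hz
  exact norm_pt _

lemma pt_mem_Q1 (q : ℚ) : pt (q : ℝ) ∈ Q1 := mem_Q1_iff.2 ⟨q, rfl⟩

def ang (z : ℂ) : ℝ := if 0 ≤ z.arg then z.arg / (2 * Real.pi) else z.arg / (2 * Real.pi) + 1

lemma ang_mem (z : ℂ) : ang z ∈ Ico (0:ℝ) 1 := by
  have hπ := Real.pi_pos
  have h1 := Complex.neg_pi_lt_arg z
  have h2 := Complex.arg_le_pi z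
  unfold ang
  split_ifs with h
  · constructor
    · positivity
    · rw [div_lt_one (by positivity)]; linarith
  · push_neg at h
    constructor
    · have : -1/2 < z.arg / (2*Real.pi) := by
        rw [lt_div_iff₀ (by positivity)]; nlinarith
      linarith
    · have : z.arg / (2*Real.pi) < 0 := div_neg_of_neg_of_pos h (by positivity)
      linarith

lemma pt_add_one (x : ℝ) : pt (x + 1) = pt x := by
  unfold pt
  push_cast
  rw [mul_add, Complex.exp_add, mul_one, Complex.exp_two_pi_mul_I, mul_one]

lemma pt_arg_div (z : ℂ) (hz : ‖z‖ = 1) : pt (z.arg / (2 * Real.pi)) = z := by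
  unfold pt
  have hπ : (Real.pi : ℂ) ≠ 0 := by exact_mod_cast Real.pi_ne_zero
  have harg : (2 * (Real.pi:ℂ) * Complex.I * ((z.arg / (2 * Real.pi) : ℝ) : ℂ))
      = (z.arg : ℂ) * Complex.I := by
    push_cast
    field_simp
  rw [harg]
  have := Complex.norm_mul_exp_arg_mul_I z
  rwa [show ‖z‖ = 1 from hz, Complex.ofReal_one, one_mul] at this

lemma pt_ang {z : ℂ} (hz : ‖z‖ = 1) : pt (ang z) = z := by
  unfold ang
  split_ifs with h
  · exact pt_arg_div z hz
  · rw [pt_add_one]; exact pt_arg_div z hz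

lemma chordSegment_mk (x y : ℂ) : chordSegment s(x, y) = segment ℝ x y := rfl

lemma pt_ne_pt {a b : ℝ} (ha : a ∈ Ico (0:ℝ) 1) (hb : b ∈ Ico (0:ℝ) 1) (h : a ≠ b) :
    pt a ≠ pt b := fun h' => h (pt_inj ha hb h')

/-- equality of chords in terms of sorted angle pairs -/
lemma mk_pt_eq_iff {a b c d : ℝ} (ha : a ∈ Ico (0:ℝ) 1) (hb : b ∈ Ico (0:ℝ) 1)
    (hc : c ∈ Ico (0:ℝ) 1) (hd : d ∈ Ico (0:ℝ) 1) (hab : a < b) (hcd : c < d) :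
    s(pt a, pt b) = s(pt c, pt d) ↔ (a = c ∧ b = d) := by
  rw [Sym2.eq_iff]
  constructor
  · rintro (⟨h1, h2⟩ | ⟨h1, h2⟩)
    · exact ⟨pt_inj ha hc h1, pt_inj hb hd h2⟩
    · have e1 := pt_inj ha hd h1
      have e2 := pt_inj hb hc h2
      exact absurd (e1 ▸ e2 ▸ hcd) (by linarith)
  · rintro ⟨rfl, rfl⟩
    left; exact ⟨rfl, rfl⟩

/-- abstract adjacency of sorted angle pairs -/
def AdjP (u v : ℝ × ℝ) : Prop :=
  u ≠ v ∧ (u.1 = v.1 ∨ u.1 = v.2 ∨ u.2 = v.1 ∨ u.2 = v.2 ∨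
    ¬(v.1 ∈ Ioo u.1 u.2 ↔ v.2 ∈ Ioo u.1 u.2))

/-- the full adjacency characterization -/
lemma adj_char {a b c d : ℝ} (ha : a ∈ Ico (0:ℝ) 1) (hb : b ∈ Ico (0:ℝ) 1)
    (hc : c ∈ Ico (0:ℝ) 1) (hd : d ∈ Ico (0:ℝ) 1) (hab : a < b) (hcd : c < d) :
    (s(pt a, pt b) ≠ s(pt c, pt d) ∧
      (chordSegment s(pt a, pt b) ∩ chordSegment s(pt c, pt d)).Nonempty)
      ↔ AdjP (a, b) (c, d) := by
  rw [chordSegment_mk, chordSegment_mk, chords_intersect_iff ha hb hc hd hab hcd,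
    Ne, mk_pt_eq_iff ha hb hc hd hab hcd]
  unfold AdjP
  simp only [Ne, Prod.mk.injEq]

/-- Any chord-like Sym2 element with endpoints on S1 is `s(pt a, pt b)` with sorted angles. -/
lemma chord_rep (C : Chord) : ∃ u : ℝ × ℝ, u.1 ∈ Ico (0:ℝ) 1 ∧ u.2 ∈ Ico (0:ℝ) 1 ∧
    u.1 < u.2 ∧ C.1 = s(pt u.1, pt u.2) := by
  obtain ⟨p, hp, hd⟩ := C
  induction p using Sym2.ind with
  | _ x y =>
    have hx : ‖x‖ = 1 := hp x (Sym2.mem_mk_left x y)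
    have hy : ‖y‖ = 1 := hp y (Sym2.mem_mk_right x y)
    have hxy : x ≠ y := fun h => hd (Sym2.mk_isDiag_iff.2 h)
    have hax : pt (ang x) = x := pt_ang hx
    have hay : pt (ang y) = y := pt_ang hy
    have hne : ang x ≠ ang y := fun h => hxy (by rw [← hax, ← hay, h])
    rcases lt_or_gt_of_ne hne with h | h
    · exact ⟨(ang x, ang y), ang_mem x, ang_mem y, h, by simp [hax, hay]⟩
    · refine ⟨(ang y, ang x), ang_mem y, ang_mem x, h, ?_⟩
      simp only [hax, hay]
      exact (Sym2.eq_swap).symm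

/-- the sorted angle pair of a chord -/
def angPair (C : Chord) : ℝ × ℝ := Classical.choose (chord_rep C)

lemma angPair_spec (C : Chord) : (angPair C).1 ∈ Ico (0:ℝ) 1 ∧ (angPair C).2 ∈ Ico (0:ℝ) 1 ∧
    (angPair C).1 < (angPair C).2 ∧ C.1 = s(pt (angPair C).1, pt (angPair C).2) :=
  Classical.choose_spec (chord_rep C)

lemma chord_ext_iff {C D : Chord} : C = D ↔ C.1 = D.1 := Subtype.ext_iff


lemma circleGraph_adj_iff (C D : Chord) :
    CircleGraph.Adj C D ↔ AdjP (angPair C) (angPair D) := by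
  obtain ⟨ha, hb, hab, hC⟩ := angPair_spec C
  obtain ⟨hc, hd, hcd, hD⟩ := angPair_spec D
  have : CircleGraph.Adj C D ↔
      (C.1 ≠ D.1 ∧ (chordSegment C.1 ∩ chordSegment D.1).Nonempty) := by
    constructor
    · rintro (⟨h1, h2⟩ : _ ∧ _); exact ⟨fun h => h1 (chord_ext_iff.2 h), h2⟩
    · rintro ⟨h1, h2⟩; exact And.intro (fun h => h1 (chord_ext_iff.1 h)) h2
  rw [this, hC, hD]
  exact (adj_char ha hb hc hd hab hcd).trans (by rw [Prod.mk.eta, Prod.mk.eta])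


lemma chordQ_ext_iff {C D : ChordQ} : C = D ↔ C.1 = D.1 := Subtype.ext_iff

/-- make a rational chord from two distinct rationals in `[0,1)` -/
def mkQ (q r : ℚ) (h : pt (q:ℝ) ≠ pt (r:ℝ)) : ChordQ :=
  ⟨s(pt (q:ℝ), pt (r:ℝ)),
    fun z hz => by
      rcases Sym2.mem_iff.1 hz with rfl | rfl
      · exact mem_Q1_iff.2 ⟨q, rfl⟩
      · exact mem_Q1_iff.2 ⟨r, rfl⟩,
    fun hd => h (Sym2.mk_isDiag_iff.1 hd)⟩

lemma mkQ_adj_iff {q r q' r' : ℚ} (hq : (q:ℝ) ∈ Ico (0:ℝ) 1) (hr : (r:ℝ) ∈ Ico (0:ℝ) 1)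
    (hq' : (q':ℝ) ∈ Ico (0:ℝ) 1) (hr' : (r':ℝ) ∈ Ico (0:ℝ) 1)
    (hqr : (q:ℝ) < r) (hqr' : (q':ℝ) < r') (h h') :
    RationalCircleGraph.Adj (mkQ q r h) (mkQ q' r' h') ↔ AdjP ((q:ℝ), (r:ℝ)) ((q':ℝ), (r':ℝ)) := by
  have : RationalCircleGraph.Adj (mkQ q r h) (mkQ q' r' h') ↔
      ((mkQ q r h).1 ≠ (mkQ q' r' h').1 ∧
        (chordSegment (mkQ q r h).1 ∩ chordSegment (mkQ q' r' h').1).Nonempty) := by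
    constructor
    · rintro (⟨h1, h2⟩ : _ ∧ _); exact ⟨fun hh => h1 (chordQ_ext_iff.2 hh), h2⟩
    · rintro ⟨h1, h2⟩; exact And.intro (fun hh => h1 (chordQ_ext_iff.1 hh)) h2
  rw [this]
  exact adj_char hq hr hq' hr' hqr hqr'

/-- ChordQ is countable -/
lemma chordQ_countable : Countable ChordQ := by
  have h0 : ((0:ℚ):ℝ) ∈ Ico (0:ℝ) 1 := by norm_num
  have hhalf : ((1/2:ℚ):ℝ) ∈ Ico (0:ℝ) 1 := by norm_num
  have hne : pt ((0:ℚ):ℝ) ≠ pt ((1/2:ℚ):ℝ) :=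
    pt_ne_pt h0 hhalf (by norm_num)
  let c0 : ChordQ := mkQ 0 (1/2) hne
  let f : ℚ × ℚ → ChordQ := fun p =>
    if h : pt (p.1:ℝ) ≠ pt (p.2:ℝ) then mkQ p.1 p.2 h else c0
  have hf : Function.Surjective f := by
    rintro ⟨p, hp, hd⟩
    induction p using Sym2.ind with
    | _ x y =>
      have hx := mem_Q1_iff.1 (hp x (Sym2.mem_mk_left x y))
      have hy := mem_Q1_iff.1 (hp y (Sym2.mem_mk_right x y))
      obtain ⟨q, rfl⟩ := hx
      obtain ⟨r, rfl⟩ := hy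
      have hne' : pt (q:ℝ) ≠ pt (r:ℝ) := fun h => hd (Sym2.mk_isDiag_iff.2 h)
      refine ⟨(q, r), ?_⟩
      simp only [f, dif_pos hne']
      rfl
  exact hf.countable


/-- the inclusion of rational chords into chords -/
def incl (C : ChordQ) : Chord :=
  ⟨C.1, fun z hz => Q1_subset_S1 (C.2.1 z hz), C.2.2⟩

lemma incl_inj : Function.Injective incl := by
  intro C D h
  exact chordQ_ext_iff.2 (chord_ext_iff.1 h)

lemma rational_isCircleGraph : IsCircleGraph RationalCircleGraph := by
  refine ⟨Set.range incl, ⟨⟨Equiv.ofInjective incl incl_inj, ?_⟩⟩⟩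
  intro C D
  simp only [SimpleGraph.comap_adj, Function.Embedding.coe_subtype,
    Equiv.ofInjective_apply]
  show CircleGraph.Adj (incl C) (incl D) ↔ RationalCircleGraph.Adj C D
  constructor
  · rintro (⟨h1, h2⟩ : _ ∧ _); exact And.intro (fun h => h1 (congrArg incl h)) h2
  · rintro (⟨h1, h2⟩ : _ ∧ _); exact And.intro (fun h => h1 (incl_inj h)) h2

/-- transfer of the abstract adjacency along a strictly monotone map -/
lemma adjP_transfer {T : Set ℝ} (g : T → ℝ) (hg : StrictMono g)
    (x y z w : T) :
    AdjP (g x, g y) (g z, g w) ↔ AdjP ((x:ℝ), (y:ℝ)) ((z:ℝ), (w:ℝ)) := by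
  have hlt : ∀ p q : T, g p < g q ↔ (p:ℝ) < (q:ℝ) := fun p q =>
    hg.lt_iff_lt.trans Subtype.coe_lt_coe.symm
  have heq : ∀ p q : T, g p = g q ↔ (p:ℝ) = (q:ℝ) := fun p q =>
    hg.injective.eq_iff.trans (by rw [Subtype.ext_iff])
  unfold AdjP
  simp only [Ne, Prod.mk.injEq, Set.mem_Ioo, hlt, heq, not_and_or]

instance : Nontrivial (Ioo (0:ℚ) 1) :=
  ⟨⟨⟨1/3, by norm_num⟩, ⟨1/2, by norm_num⟩, by intro h; rw [Subtype.ext_iff] at h; norm_num at h⟩⟩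

lemma main3 (V : Type) [Countable V] (G : SimpleGraph V) (hG : IsCircleGraph G) :
    ∃ S : Set ChordQ, Nonempty (G ≃g (RationalCircleGraph.induce S)) := by
  obtain ⟨F, ⟨h⟩⟩ := hG
  let C : V → Chord := fun v => (h v : Chord)
  have hadj : ∀ u v, G.Adj u v ↔ CircleGraph.Adj (C u) (C v) := by
    intro u v
    rw [← h.map_rel_iff]
    simp only [SimpleGraph.comap_adj, Function.Embedding.coe_subtype]
    exact Iff.rfl
  have hCinj : Function.Injective C := fun u v huv =>
    h.toEquiv.injective (Subtype.ext huv)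
  let a : V → ℝ := fun v => (angPair (C v)).1
  let b : V → ℝ := fun v => (angPair (C v)).2
  have hab : ∀ v, a v < b v := fun v => (angPair_spec (C v)).2.2.1
  let T : Set ℝ := range a ∪ range b
  have hTc : T.Countable := (countable_range a).union (countable_range b)
  haveI := hTc.to_subtype
  obtain ⟨φ⟩ := Order.embedding_from_countable_to_dense (α := T) (β := Ioo (0:ℚ) 1)
  let ψ : T → ℝ := fun x => ((φ x : ℚ) : ℝ)
  have hψmono : StrictMono ψ := by
    intro x y hxy
    have h1 : φ x < φ y := φ.strictMono hxy
    have h2 : (φ x : ℚ) < (φ y : ℚ) := h1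
    show ((φ x : ℚ) : ℝ) < ((φ y : ℚ) : ℝ)
    exact_mod_cast h2
  have mem01 : ∀ x : T, ψ x ∈ Ico (0:ℝ) 1 := by
    intro x
    obtain ⟨h1, h2⟩ := (φ x).2
    constructor
    · have : (0:ℝ) < ((φ x : ℚ) : ℝ) := by exact_mod_cast h1
      linarith
    · show ((φ x : ℚ) : ℝ) < 1
      exact_mod_cast h2
  let A : V → T := fun v => ⟨a v, Or.inl ⟨v, rfl⟩⟩
  let B : V → T := fun v => ⟨b v, Or.inr ⟨v, rfl⟩⟩
  have hABlt : ∀ v, ψ (A v) < ψ (B v) := fun v => hψmono (Subtype.mk_lt_mk.2 (hab v))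
  have hne : ∀ v, pt ((((φ (A v)) : ℚ) : ℝ)) ≠ pt ((((φ (B v)) : ℚ) : ℝ)) := fun v =>
    pt_ne_pt (mem01 (A v)) (mem01 (B v)) (ne_of_lt (hABlt v))
  let f : V → ChordQ := fun v => mkQ (φ (A v)) (φ (B v)) (hne v)
  have hfadj : ∀ u v, RationalCircleGraph.Adj (f u) (f v) ↔ G.Adj u v := by
    intro u v
    show RationalCircleGraph.Adj (mkQ _ _ (hne u)) (mkQ _ _ (hne v)) ↔ _
    rw [mkQ_adj_iff (mem01 (A u)) (mem01 (B u)) (mem01 (A v)) (mem01 (B v))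
      (hABlt u) (hABlt v) (hne u) (hne v)]
    rw [hadj u v, circleGraph_adj_iff]
    have ht := adjP_transfer ψ hψmono (A u) (B u) (A v) (B v)
    show AdjP (ψ (A u), ψ (B u)) (ψ (A v), ψ (B v)) ↔ _
    rw [ht]
  have hfinj : Function.Injective f := by
    intro u v huv
    have h1 : (f u).1 = (f v).1 := congrArg Subtype.val huv
    have h2 : s(pt (ψ (A u)), pt (ψ (B u))) = s(pt (ψ (A v)), pt (ψ (B v))) := h1
    rw [mk_pt_eq_iff (mem01 (A u)) (mem01 (B u)) (mem01 (A v)) (mem01 (B v))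
      (hABlt u) (hABlt v)] at h2
    have hA : A u = A v := hψmono.injective h2.1
    have hB : B u = B v := hψmono.injective h2.2
    have ha' : a u = a v := congrArg Subtype.val hA
    have hb' : b u = b v := congrArg Subtype.val hB
    have hpair : angPair (C u) = angPair (C v) := Prod.ext ha' hb'
    have hCuv : C u = C v := by
      apply chord_ext_iff.2
      rw [(angPair_spec (C u)).2.2.2, (angPair_spec (C v)).2.2.2, hpair]
    exact hCinj hCuv
  refine ⟨Set.range f, ⟨⟨Equiv.ofInjective f hfinj, ?_⟩⟩⟩
  intro u v
  simp only [SimpleGraph.comap_adj, Function.Embedding.coe_subtype, Equiv.ofInjective_apply]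
  exact hfadj u v

end aux

/-- `𝒞_ℚ` is strongly universal for the class of countable circle
graphs: it is itself a countable circle graph, and every countable circle graph is
isomorphic to an induced subgraph of `𝒞_ℚ`. -/
theorem rationalCircleGraph_stronglyUniversal :
    Countable ChordQ ∧ IsCircleGraph RationalCircleGraph ∧
    ∀ (V : Type) [Countable V] (G : SimpleGraph V), IsCircleGraph G →
      ∃ S : Set ChordQ, Nonempty (G ≃g (RationalCircleGraph.induce S)) := by
  exact ⟨chordQ_countable, rational_isCircleGraph, fun V _ G hG => main3 V G hG⟩
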